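/- If X̂ minimizes f over the set of n×n matrices with nonnegative entries, then f(X̂) + 2τ·x̂ = τ·(α+β), where x̂ = Σ_{i,j} X̂ᵢⱼ. -/

import Mathlib

/-- Generalized KL divergence, with the convention `0 · log 0 = 0`. -/
noncomputable def KL {n : ℕ} (x y : Fin n → ℝ) : ℝ :=
  ∑ i, (x i * Real.log (x i / y i) - x i + y i)

/-- The (unregularized) UOT objective. -/
noncomputable def fUOT {n : ℕ} (a b : Fin n → ℝ) (C : Fin n → Fin n → ℝ)
    (τ : ℝ) (X : Fin n → Fin n → ℝ) : ℝ :=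
  (∑ i, ∑ j, C i j * X i j)
    + τ * KL (fun i => ∑ j, X i j) a + τ * KL (fun j => ∑ i, X i j) b

lemma deriv_key (S K : ℝ)
    (h : ∀ t : ℝ, 0 < t → 0 ≤ (t - 1) * S + K * (t * Real.log t)) :
    S + K = 0 := by
  have hd : HasDerivAt (fun t : ℝ => (t - 1) * S + K * (t * Real.log t)) (S + K) 1 := by
    have h1 : HasDerivAt (fun t : ℝ => (t - 1) * S) S 1 := by
      simpa using ((hasDerivAt_id (1:ℝ)).sub_const 1).mul_const S
    have h2 : HasDerivAt (fun t : ℝ => t * Real.log t) (Real.log 1 + 1) 1 :=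
      Real.hasDerivAt_mul_log one_ne_zero
    have := h1.add ((h2.const_mul K))
    simpa [mul_add, Pi.add_def] using this
  have hmin : IsLocalMin (fun t : ℝ => (t - 1) * S + K * (t * Real.log t)) 1 := by
    have hev : ∀ᶠ t in nhds (1:ℝ), 0 < t := eventually_gt_nhds zero_lt_one
    refine hev.mono fun t ht => ?_
    simpa using h t ht
  exact hmin.hasDerivAt_eq_zero hd

lemma KL_smul {n : ℕ} {t : ℝ} (ht : 0 < t) (x y : Fin n → ℝ)
    (hx : ∀ i, 0 ≤ x i) (hy : ∀ i, 0 < y i) :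
    KL (fun i => t * x i) y
      = t * KL x y + (∑ i, x i) * (t * Real.log t) + (1 - t) * ∑ i, y i := by
  have key : ∀ i, t * x i * Real.log (t * x i / y i) - t * x i + y i
      = t * (x i * Real.log (x i / y i) - x i + y i) + x i * (t * Real.log t)
        + (1 - t) * y i := by
    intro i
    rcases eq_or_lt_of_le (hx i) with h | h
    · simp [← h]; ring
    · have hlog : Real.log (t * x i / y i) = Real.log t + Real.log (x i / y i) := by
        rw [mul_div_assoc, Real.log_mul (ne_of_gt ht)
          (ne_of_gt (div_pos h (hy i)))]
      rw [hlog]; ring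
  unfold KL
  calc (∑ i, (t * x i * Real.log (t * x i / y i) - t * x i + y i))
      = ∑ i, (t * (x i * Real.log (x i / y i) - x i + y i) + x i * (t * Real.log t)
          + (1 - t) * y i) := Finset.sum_congr rfl fun i _ => key i
    _ = t * (∑ i, (x i * Real.log (x i / y i) - x i + y i))
          + (∑ i, x i) * (t * Real.log t) + (1 - t) * ∑ i, y i := by
        rw [Finset.sum_add_distrib, Finset.sum_add_distrib, ← Finset.mul_sum,
          ← Finset.sum_mul, ← Finset.mul_sum]

/-- If `X̂` minimizes `f` over nonnegative matrices, then
`f(X̂) + 2τ·x̂ = τ·(α+β)` where `x̂ = Σᵢⱼ X̂ᵢⱼ`. -/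
theorem stmt_10 {n : ℕ} (hn : 2 ≤ n) (a b : Fin n → ℝ)
    (ha : ∀ i, 0 < a i) (hb : ∀ j, 0 < b j)
    (C : Fin n → Fin n → ℝ) (hC : ∀ i j, 0 ≤ C i j)
    (τ : ℝ) (hτ : 0 < τ)
    (Xhat : Fin n → Fin n → ℝ) (hXhat : ∀ i j, 0 ≤ Xhat i j)
    (hmin : ∀ Y : Fin n → Fin n → ℝ, (∀ i j, 0 ≤ Y i j) →
      fUOT a b C τ Xhat ≤ fUOT a b C τ Y) :
    fUOT a b C τ Xhat + 2 * τ * (∑ i, ∑ j, Xhat i j)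
      = τ * ((∑ i, a i) + (∑ j, b j)) := by
  set r := fun i => ∑ j, Xhat i j with hr
  set c := fun j => ∑ i, Xhat i j with hc
  have hrnn : ∀ i, 0 ≤ r i := fun i => Finset.sum_nonneg fun j _ => hXhat i j
  have hcnn : ∀ j, 0 ≤ c j := fun j => Finset.sum_nonneg fun i _ => hXhat i j
  have hsum : ∑ j, c j = ∑ i, r i := by
    simp only [hr, hc]; rw [Finset.sum_comm]

  -- value of f on t • Xhat
  have hval : ∀ t : ℝ, 0 < t →
      fUOT a b C τ (fun i j => t * Xhat i j)
        = fUOT a b C τ Xhat + (t - 1) * (fUOT a b C τ Xhat - τ * ((∑ i, a i) + (∑ j, b j)))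
          + (2 * τ * (∑ i, r i)) * (t * Real.log t) := by
    intro t ht
    have hrow : (fun i => ∑ j, t * Xhat i j) = fun i => t * r i := by
      funext i; rw [← Finset.mul_sum]
    have hcol : (fun j => ∑ i, t * Xhat i j) = fun j => t * c j := by
      funext j; rw [← Finset.mul_sum]
    have hCt : (∑ i, ∑ j, C i j * (t * Xhat i j)) = t * ∑ i, ∑ j, C i j * Xhat i j := by
      rw [Finset.mul_sum]
      refine Finset.sum_congr rfl fun i _ => ?_
      rw [Finset.mul_sum]
      exact Finset.sum_congr rfl fun j _ => by ring
    unfold fUOT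
    rw [hrow, hcol, hCt, KL_smul ht r a hrnn ha, KL_smul ht c b hcnn hb, hsum,
      ← hr, ← hc]
    ring
  have hmain : (fUOT a b C τ Xhat - τ * ((∑ i, a i) + (∑ j, b j)))
      + 2 * τ * (∑ i, r i) = 0 := by
    apply deriv_key
    intro t ht
    have := hmin (fun i j => t * Xhat i j) (fun i j => mul_nonneg ht.le (hXhat i j))
    rw [hval t ht] at this
    linarith
  have hx : (∑ i, ∑ j, Xhat i j) = ∑ i, r i := rfl
  rw [hx]
  linarith
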